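/- Suppose B ∈ ℝ^{N×d} satisfies the Restricted Isometry Property up to sparsity level 2k with constants δ_k, δ_{2k} ∈ [0,1). Then for every x in the kernel of B with x ≠ 0, and every subset U ⊆ {1,…,d} with |U| = k, we have ‖x_U‖₂ ≤ (δ_{2k}/(1−δ_k)) · (1/√k) · ‖x‖₁, where x_U denotes the restriction of x to coordinates in U (zero elsewhere). -/

import Mathlib

open Finset Matrix

noncomputable def l1 {ι : Type*} [Fintype ι] (x : ι → ℝ) : ℝ := ∑ i, |x i|

noncomputable def l2 {ι : Type*} [Fintype ι] (x : ι → ℝ) : ℝ := Real.sqrt (∑ i, (x i) ^ 2)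

open scoped Classical in
/-- `x` has at most `m` nonzero entries. -/
def sparse {ι : Type*} [Fintype ι] (m : ℕ) (x : ι → ℝ) : Prop :=
  (Finset.univ.filter (fun i => x i ≠ 0)).card ≤ m

/-- Restricted Isometry Property at level `m` with constant `δ`. -/
def RIP {N d : ℕ} (A : Matrix (Fin N) (Fin d) ℝ) (m : ℕ) (δ : ℝ) : Prop :=
  ∀ x : Fin d → ℝ, sparse m x →
    (1 - δ) * (l2 x) ^ 2 ≤ (l2 (A.mulVec x)) ^ 2 ∧
    (l2 (A.mulVec x)) ^ 2 ≤ (1 + δ) * (l2 x) ^ 2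

/-- Restriction of a vector to the coordinates in `S` (zero elsewhere). -/
def restr {d : ℕ} (S : Finset (Fin d)) (x : Fin d → ℝ) : Fin d → ℝ :=
  fun i => if i ∈ S then x i else 0

open scoped Classical

section helpers

variable {ι : Type*} [Fintype ι]

lemma my_l2_nonneg (x : ι → ℝ) : 0 ≤ l2 x := Real.sqrt_nonneg _

lemma my_l2_sq (x : ι → ℝ) : (l2 x) ^ 2 = ∑ i, (x i) ^ 2 := Real.sq_sqrt (by positivity)

lemma my_l2_eq_zero {x : ι → ℝ} (h : l2 x = 0) : ∀ i, x i = 0 := by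
  have h2 : ∑ i, (x i) ^ 2 = 0 := by
    rw [← my_l2_sq x, h]; ring
  intro i
  have := (Finset.sum_eq_zero_iff_of_nonneg (fun i _ => sq_nonneg (x i))).1 h2 i (mem_univ i)
  exact pow_eq_zero_iff (by norm_num) |>.1 this

lemma my_l1_nonneg (x : ι → ℝ) : 0 ≤ l1 x :=
  Finset.sum_nonneg fun i _ => abs_nonneg _

lemma my_sparse_of_subset {m : ℕ} {x : ι → ℝ} {S : Finset ι}
    (h : ∀ i, x i ≠ 0 → i ∈ S) (hS : S.card ≤ m) : sparse m x := by
  unfold sparse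
  refine le_trans (Finset.card_le_card ?_) hS
  intro i hi
  simp only [mem_filter, mem_univ, true_and] at hi
  exact h i hi

lemma my_l2_smul (c : ℝ) (hc : 0 ≤ c) (x : ι → ℝ) : l2 (c • x) = c * l2 x := by
  unfold l2
  have : ∑ i, ((c • x) i) ^ 2 = c ^ 2 * ∑ i, (x i) ^ 2 := by
    rw [Finset.mul_sum]; exact Finset.sum_congr rfl fun i _ => by simp [Pi.smul_apply, smul_eq_mul]; ring
  rw [this, Real.sqrt_mul (sq_nonneg c), Real.sqrt_sq hc]

lemma my_l2_neg (x : ι → ℝ) : l2 (-x) = l2 x := by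
  unfold l2; congr 1; exact Finset.sum_congr rfl fun i _ => by simp

end helpers

section nearorth

variable {N d : ℕ}

lemma my_sparse_add {k : ℕ} {u v : Fin d → ℝ} (hu : sparse k u) (hv : sparse k v) :
    sparse (2 * k) (u + v) := by
  unfold sparse at hu hv ⊢
  have hsub : (univ.filter (fun i => (u + v) i ≠ 0)) ⊆
      (univ.filter (fun i => u i ≠ 0)) ∪ (univ.filter fun i => v i ≠ 0) := by
    intro i hi
    simp only [mem_filter, mem_union, mem_univ, true_and, Pi.add_apply] at hi ⊢
    by_contra h
    push_neg at h
    rw [h.1, h.2] at hi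
    simp at hi
  refine le_trans (Finset.card_le_card hsub) (le_trans (Finset.card_union_le _ _) (by omega))

lemma my_sparse_sub {k : ℕ} {u v : Fin d → ℝ} (hu : sparse k u) (hv : sparse k v) :
    sparse (2 * k) (u - v) := by
  have hv' : sparse k (-v) := by
    unfold sparse at hv ⊢
    refine le_trans (le_of_eq (congrArg Finset.card ?_)) hv
    apply Finset.filter_congr
    intro i _
    simp
  simpa [sub_eq_add_neg] using my_sparse_add hu hv'

lemma my_inner_core (B : Matrix (Fin N) (Fin d) ℝ) (k : ℕ) (δ : ℝ)
    (hR : RIP B (2 * k) δ) (u v : Fin d → ℝ)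
    (hu : sparse k u) (hv : sparse k v) (hdisj : ∀ i, u i = 0 ∨ v i = 0) :
    2 * ∑ n, B.mulVec u n * B.mulVec v n ≤ δ * ((l2 u) ^ 2 + (l2 v) ^ 2) := by
  have h1 := (hR (u + v) (my_sparse_add hu hv)).2
  have h2 := (hR (u - v) (my_sparse_sub hu hv)).1
  have e1 : (l2 (u + v)) ^ 2 = (l2 u) ^ 2 + (l2 v) ^ 2 := by
    rw [my_l2_sq, my_l2_sq, my_l2_sq, ← Finset.sum_add_distrib]
    refine Finset.sum_congr rfl fun i _ => ?_
    rcases hdisj i with h | h <;> simp [Pi.add_apply, h]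
  have e2 : (l2 (u - v)) ^ 2 = (l2 u) ^ 2 + (l2 v) ^ 2 := by
    rw [my_l2_sq, my_l2_sq, my_l2_sq, ← Finset.sum_add_distrib]
    refine Finset.sum_congr rfl fun i _ => ?_
    rcases hdisj i with h | h <;> simp [Pi.sub_apply, h]
  have e3 : (l2 (B.mulVec (u + v))) ^ 2 =
      (∑ n, (B.mulVec u n) ^ 2) + (∑ n, (B.mulVec v n) ^ 2) +
        2 * ∑ n, B.mulVec u n * B.mulVec v n := by
    rw [my_l2_sq, Matrix.mulVec_add]
    rw [Finset.mul_sum, ← Finset.sum_add_distrib, ← Finset.sum_add_distrib]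
    refine Finset.sum_congr rfl fun n _ => by simp [Pi.add_apply]; ring
  have e4 : (l2 (B.mulVec (u - v))) ^ 2 =
      (∑ n, (B.mulVec u n) ^ 2) + (∑ n, (B.mulVec v n) ^ 2) -
        2 * ∑ n, B.mulVec u n * B.mulVec v n := by
    rw [my_l2_sq, Matrix.mulVec_sub]
    rw [Finset.mul_sum]
    rw [show ((∑ n, (B.mulVec u n) ^ 2) + (∑ n, (B.mulVec v n) ^ 2) -
        ∑ n, 2 * (B.mulVec u n * B.mulVec v n)) =
        ∑ n, ((B.mulVec u n) ^ 2 + (B.mulVec v n) ^ 2 - 2 * (B.mulVec u n * B.mulVec v n)) by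
      rw [Finset.sum_sub_distrib, Finset.sum_add_distrib]]
    refine Finset.sum_congr rfl fun n _ => by simp [Pi.sub_apply]; ring
  rw [e1] at h1
  rw [e2] at h2
  rw [e3] at h1
  rw [e4] at h2
  linarith

lemma my_inner_le (B : Matrix (Fin N) (Fin d) ℝ) (k : ℕ) (δ : ℝ) (hδ : 0 ≤ δ)
    (hR : RIP B (2 * k) δ) (u v : Fin d → ℝ)
    (hu : sparse k u) (hv : sparse k v) (hdisj : ∀ i, u i = 0 ∨ v i = 0) :
    ∑ n, B.mulVec u n * B.mulVec v n ≤ δ * (l2 u * l2 v) := by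
  rcases eq_or_lt_of_le (my_l2_nonneg u) with hu0 | hu0
  · have : ∀ i, u i = 0 := my_l2_eq_zero hu0.symm
    have hu' : u = 0 := funext this
    have : B.mulVec u = 0 := by rw [hu']; simp
    rw [this, ← hu0]
    simp
  rcases eq_or_lt_of_le (my_l2_nonneg v) with hv0 | hv0
  · have : ∀ i, v i = 0 := my_l2_eq_zero hv0.symm
    have hv' : v = 0 := funext this
    have : B.mulVec v = 0 := by rw [hv']; simp
    rw [this, ← hv0]
    simp
  set a := l2 u with ha
  set b := l2 v with hb
  have hu2 : sparse k (b • u) := by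
    unfold sparse at hu ⊢
    refine le_trans (Finset.card_le_card ?_) hu
    intro i hi
    simp only [mem_filter, mem_univ, true_and, Pi.smul_apply, smul_eq_mul] at hi ⊢
    intro h
    rw [h] at hi
    simp at hi
  have hv2 : sparse k (a • v) := by
    unfold sparse at hv ⊢
    refine le_trans (Finset.card_le_card ?_) hv
    intro i hi
    simp only [mem_filter, mem_univ, true_and, Pi.smul_apply, smul_eq_mul] at hi ⊢
    intro h
    rw [h] at hi
    simp at hi
  have hdisj2 : ∀ i, (b • u) i = 0 ∨ (a • v) i = 0 := by
    intro i
    rcases hdisj i with h | h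
    · left; simp [h]
    · right; simp [h]
  have hcore := my_inner_core B k δ hR (b • u) (a • v) hu2 hv2 hdisj2
  rw [my_l2_smul b (le_of_lt hv0) u, my_l2_smul a (le_of_lt hu0) v] at hcore
  have hms : ∑ n, B.mulVec (b • u) n * B.mulVec (a • v) n
      = (a * b) * ∑ n, B.mulVec u n * B.mulVec v n := by
    rw [Matrix.mulVec_smul, Matrix.mulVec_smul, Finset.mul_sum]
    exact Finset.sum_congr rfl fun n _ => by simp [Pi.smul_apply, smul_eq_mul]; ring
  rw [hms] at hcore
  nlinarith [mul_pos hu0 hv0]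

end nearorth

section blocks

variable {d : ℕ}

/-- rank of index `i` when sorting `|x|` in decreasing order -/
noncomputable def rk (x : Fin d → ℝ) (i : Fin d) : ℕ :=
  (((Tuple.sort (fun i => -|x i|)).symm i : Fin d) : ℕ)

noncomputable def blk (x : Fin d → ℝ) (k j : ℕ) : Finset (Fin d) :=
  univ.filter (fun i => j * k ≤ rk x i ∧ rk x i < (j + 1) * k)

lemma mem_blk {x : Fin d → ℝ} {k j : ℕ} {i : Fin d} :
    i ∈ blk x k j ↔ (j * k ≤ rk x i ∧ rk x i < (j + 1) * k) := by
  simp [blk]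

lemma rk_lt (x : Fin d → ℝ) (i : Fin d) : rk x i < d := Fin.is_lt _

lemma rk_anti (x : Fin d → ℝ) {i i' : Fin d} (h : rk x i ≤ rk x i') :
    |x i'| ≤ |x i| := by
  set σ := Tuple.sort (fun i => -|x i|) with hσ
  have hm := Tuple.monotone_sort (fun i => -|x i|)
  have h2 : σ.symm i ≤ σ.symm i' := by
    rw [Fin.le_def]; exact h
  have := hm h2
  simp only [Function.comp_apply, Equiv.apply_symm_apply, ← hσ] at this
  linarith [abs_nonneg (x i)]

lemma rk_inj (x : Fin d → ℝ) {i i' : Fin d} (h : rk x i = rk x i') : i = i' := by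
  have : (Tuple.sort (fun i => -|x i|)).symm i = (Tuple.sort (fun i => -|x i|)).symm i' :=
    Fin.val_injective h
  exact (Tuple.sort (fun i => -|x i|)).symm.injective this

lemma card_blk_le (x : Fin d → ℝ) (k j : ℕ) : (blk x k j).card ≤ k := by
  have h1 : (blk x k j).card ≤ (Finset.Ico (j * k) ((j + 1) * k)).card := by
    apply Finset.card_le_card_of_injOn (fun i => rk x i)
    · intro i hi
      rw [Finset.mem_coe, mem_blk] at hi
      rw [Finset.mem_coe, Finset.mem_Ico]
      exact hi
    · intro i _ i' _ h
      exact rk_inj x h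
  rw [Nat.card_Ico] at h1
  have : (j + 1) * k = j * k + k := by ring
  omega

lemma card_blk_eq (x : Fin d → ℝ) {k j : ℕ} (h : (j + 1) * k ≤ d) :
    (blk x k j).card = k := by
  refine le_antisymm (card_blk_le x k j) ?_
  rcases Nat.eq_zero_or_pos k with hk | hk
  · omega
  have hd : 0 < d := by
    have : 0 < (j + 1) * k := Nat.mul_pos (Nat.succ_pos j) hk
    omega
  have h1 : (Finset.Ico (j * k) ((j + 1) * k)).card ≤ (blk x k j).card := by
    apply Finset.card_le_card_of_injOn
      (fun r => Tuple.sort (fun i => -|x i|) ⟨r % d, Nat.mod_lt _ hd⟩)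
    · intro r hr
      rw [Finset.mem_coe, Finset.mem_Ico] at hr
      have hrd : r < d := lt_of_lt_of_le hr.2 h
      rw [Finset.mem_coe, mem_blk]
      have : rk x (Tuple.sort (fun i => -|x i|) ⟨r % d, Nat.mod_lt _ hd⟩) = r := by
        unfold rk
        rw [Equiv.symm_apply_apply]
        simp [Nat.mod_eq_of_lt hrd]
      rw [this]
      exact hr
    · intro r hr r' hr' hrr
      simp only [Finset.coe_Ico, Set.mem_Ico] at hr hr'
      have hrd : r < d := lt_of_lt_of_le hr.2 h
      have hrd' : r' < d := lt_of_lt_of_le hr'.2 h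
      have h5 := (Tuple.sort (fun i => -|x i|)).injective hrr
      have h6 : r % d = r' % d := Fin.mk.inj_iff.mp h5
      rwa [Nat.mod_eq_of_lt hrd, Nat.mod_eq_of_lt hrd'] at h6
  rw [Nat.card_Ico] at h1
  have : (j + 1) * k = j * k + k := by ring
  omega

lemma blk_uniq {k : ℕ} (hk : 0 < k) {r j j' : ℕ}
    (h1 : j * k ≤ r) (h2 : r < (j + 1) * k) (h3 : j' * k ≤ r) (h4 : r < (j' + 1) * k) :
    j = j' := by
  rcases lt_trichotomy j j' with h | h | h
  · exfalso
    have : (j + 1) * k ≤ j' * k := Nat.mul_le_mul_right k h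
    omega
  · exact h
  · exfalso
    have : (j' + 1) * k ≤ j * k := Nat.mul_le_mul_right k h
    omega

lemma mem_blk_div {x : Fin d → ℝ} {k : ℕ} (hk : 0 < k) (i : Fin d) :
    i ∈ blk x k (rk x i / k) := by
  rw [mem_blk]
  have h1 := Nat.div_add_mod (rk x i) k
  have h2 := Nat.mod_lt (rk x i) hk
  constructor
  · have : rk x i / k * k = k * (rk x i / k) := Nat.mul_comm _ _
    omega
  · have : (rk x i / k + 1) * k = k * (rk x i / k) + k := by ring
    omega

lemma sum_restr_blk {x : Fin d → ℝ} {k : ℕ} (hk : 0 < k) (i : Fin d) :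
    ∑ j ∈ Finset.range d, restr (blk x k j) x i = x i := by
  have hmem : rk x i / k ∈ Finset.range d := by
    rw [Finset.mem_range]
    have := rk_lt x i
    have := Nat.div_le_self (rk x i) k
    omega
  rw [Finset.sum_eq_single_of_mem (rk x i / k) hmem]
  · simp [restr, mem_blk_div hk i]
  · intro j _ hj
    simp only [restr]
    rw [if_neg]
    intro hmem'
    rw [mem_blk] at hmem'
    have hself := mem_blk_div (x := x) hk i
    rw [mem_blk] at hself
    exact hj (blk_uniq hk hmem'.1 hmem'.2 hself.1 hself.2)

lemma blk_disjoint {x : Fin d → ℝ} {k : ℕ} (hk : 0 < k) {j j' : ℕ} (h : j ≠ j') :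
    Disjoint (blk x k j) (blk x k j') := by
  rw [Finset.disjoint_left]
  intro i hi hi'
  rw [mem_blk] at hi hi'
  exact h (blk_uniq hk hi.1 hi.2 hi'.1 hi'.2)

lemma blk_cover {x : Fin d → ℝ} {k : ℕ} (hk : 0 < k) :
    (Finset.range d).biUnion (blk x k) = univ := by
  refine Finset.eq_univ_of_forall fun i => ?_
  rw [Finset.mem_biUnion]
  refine ⟨rk x i / k, ?_, mem_blk_div hk i⟩
  rw [Finset.mem_range]
  have := rk_lt x i
  have := Nat.div_le_self (rk x i) k
  omega

lemma l1_blk_sum {x : Fin d → ℝ} {k : ℕ} (hk : 0 < k) :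
    ∑ j ∈ Finset.range d, ∑ i ∈ blk x k j, |x i| = l1 x := by
  rw [l1, ← blk_cover (x := x) hk, Finset.sum_biUnion]
  intro j hj j' hj' hne
  exact blk_disjoint hk hne

lemma restr_sq_sum (S : Finset (Fin d)) (x : Fin d → ℝ) :
    (l2 (restr S x)) ^ 2 = ∑ i ∈ S, (x i) ^ 2 := by
  rw [my_l2_sq]
  rw [← Finset.sum_filter_add_sum_filter_not univ (fun i => i ∈ S)]
  have h1 : ∀ i ∈ univ.filter (fun i => i ∈ S), (restr S x i) ^ 2 = (x i) ^ 2 := by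
    intro i hi
    simp only [mem_filter] at hi
    simp [restr, hi.2]
  have h2 : ∀ i ∈ univ.filter (fun i => ¬ i ∈ S), (restr S x i) ^ 2 = 0 := by
    intro i hi
    simp only [mem_filter] at hi
    simp [restr, hi.2]
  rw [Finset.sum_congr rfl h1, Finset.sum_congr rfl h2]
  simp [Finset.filter_mem_eq_inter]

lemma sparse_restr {k : ℕ} {S : Finset (Fin d)} (h : S.card ≤ k) (x : Fin d → ℝ) :
    sparse k (restr S x) := by
  refine my_sparse_of_subset (fun i hi => ?_) h
  by_contra hmem
  exact hi (by simp [restr, hmem])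

/-- The key shelling bound: l2 of block j+1 is at most l1 of block j over sqrt k. -/
lemma blk_l2_le {x : Fin d → ℝ} {k : ℕ} (hk : 0 < k) (j : ℕ) :
    l2 (restr (blk x k (j + 1)) x) ≤ (∑ i ∈ blk x k j, |x i|) / Real.sqrt k := by
  set L := ∑ i ∈ blk x k j, |x i| with hL
  have hLnn : 0 ≤ L := Finset.sum_nonneg fun i _ => abs_nonneg _
  rcases Finset.eq_empty_or_nonempty (blk x k (j + 1)) with he | hne
  · rw [show restr (blk x k (j + 1)) x = (0 : Fin d → ℝ) by
      funext i; simp [restr, he]]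
    have : l2 (0 : Fin d → ℝ) = 0 := by simp [l2]
    rw [this]
    positivity
  obtain ⟨i₀, hi₀⟩ := hne
  rw [mem_blk] at hi₀
  have hfull : (j + 1) * k ≤ d := by
    have := rk_lt x i₀
    omega
  have hcard : (blk x k j).card = k := card_blk_eq x hfull
  -- every entry of block j+1 is at most L / k
  have hbound : ∀ i ∈ blk x k (j + 1), |x i| ≤ L / k := by
    intro i hi
    rw [mem_blk] at hi
    have h1 : ∀ i' ∈ blk x k j, |x i| ≤ |x i'| := by
      intro i' hi'
      rw [mem_blk] at hi'
      apply rk_anti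
      have : (j + 1) * k = j * k + k := by ring
      omega
    have h2 : (k : ℝ) * |x i| ≤ L := by
      calc (k : ℝ) * |x i| = ∑ _i' ∈ blk x k j, |x i| := by
            rw [Finset.sum_const, hcard]; simp [mul_comm]
        _ ≤ L := Finset.sum_le_sum h1
    rw [le_div_iff₀ (by exact_mod_cast hk)]
    linarith
  have hsq : (l2 (restr (blk x k (j + 1)) x)) ^ 2 ≤ L ^ 2 / k := by
    rw [restr_sq_sum]
    calc ∑ i ∈ blk x k (j + 1), (x i) ^ 2
        ≤ ∑ _i ∈ blk x k (j + 1), (L / k) ^ 2 := by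
          refine Finset.sum_le_sum fun i hi => ?_
          have := hbound i hi
          have habs : 0 ≤ |x i| := abs_nonneg _
          calc (x i) ^ 2 = |x i| ^ 2 := (sq_abs _).symm
            _ ≤ (L / k) ^ 2 := by nlinarith
      _ = (blk x k (j + 1)).card * (L / k) ^ 2 := by rw [Finset.sum_const]; simp
      _ ≤ k * (L / k) ^ 2 := by
          have := card_blk_le x k (j + 1)
          have h0 : (0:ℝ) ≤ (L / k) ^ 2 := sq_nonneg _
          have : ((blk x k (j + 1)).card : ℝ) ≤ (k : ℝ) := by exact_mod_cast this
          nlinarith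
      _ = L ^ 2 / k := by
          field_simp
  have hknn : (0:ℝ) < k := by exact_mod_cast hk
  have hs := Real.sqrt_le_sqrt hsq
  rw [Real.sqrt_sq (my_l2_nonneg _)] at hs
  calc l2 (restr (blk x k (j + 1)) x) ≤ Real.sqrt (L ^ 2 / k) := hs
    _ = L / Real.sqrt k := by
        rw [Real.sqrt_div (sq_nonneg L), Real.sqrt_sq hLnn]

end blocks

theorem stmt1 {N d k : ℕ} (B : Matrix (Fin N) (Fin d) ℝ) (δk δ2k : ℝ)
    (hδk0 : 0 ≤ δk) (hδk1 : δk < 1) (hδ2k0 : 0 ≤ δ2k) (hδ2k1 : δ2k < 1)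
    (hRk : RIP B k δk) (hR2k : RIP B (2 * k) δ2k)
    (x : Fin d → ℝ) (hker : B.mulVec x = 0) (hx : x ≠ 0)
    (U : Finset (Fin d)) (hU : U.card = k) :
    l2 (restr U x) ≤ (δ2k / (1 - δk)) * (1 / Real.sqrt k) * l1 x := by
  rcases Nat.eq_zero_or_pos k with hk0 | hk
  · subst hk0
    have hUe : U = ∅ := Finset.card_eq_zero.mp hU
    rw [hUe]
    have h1 : l2 (restr (∅ : Finset (Fin d)) x) = 0 := by
      simp [l2, restr]
    rw [h1, Nat.cast_zero, Real.sqrt_zero]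
    simp
  have hkd : k ≤ d := by
    have := Finset.card_le_univ U
    rw [hU] at this
    simpa using this
  have hd : 0 < d := lt_of_lt_of_le hk hkd
  have hsk : (0:ℝ) < Real.sqrt k := Real.sqrt_pos.mpr (by exact_mod_cast hk)
  have h1k : (0:ℝ) < 1 - δk := by linarith
  set y := restr (blk x k 0) x with hy
  -- Step 1: l2 (restr U x) ≤ l2 y since blk 0 carries the k largest entries
  have hT0card : (blk x k 0).card = k := by
    have : (0 + 1) * k = k := by ring
    exact card_blk_eq x (by omega)
  have hUy : l2 (restr U x) ≤ l2 y := by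
    have hAB : (U \ blk x k 0).card = (blk x k 0 \ U).card := by
      have h1 := Finset.card_inter_add_card_sdiff U (blk x k 0)
      have h2 := Finset.card_inter_add_card_sdiff (blk x k 0) U
      rw [Finset.inter_comm] at h2
      omega
    have hcmp : ∀ a ∈ U \ blk x k 0, ∀ b ∈ blk x k 0 \ U, (x a) ^ 2 ≤ (x b) ^ 2 := by
      intro a ha b hb
      rw [Finset.mem_sdiff] at ha hb
      have h01 : (0 + 1) * k = k := by ring
      have h00 : 0 * k = 0 := by ring
      have hra : k ≤ rk x a := by
        by_contra hlt
        push_neg at hlt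
        exact ha.2 (mem_blk.mpr ⟨by omega, by omega⟩)
      have hrb : rk x b < k := by
        have := (mem_blk.mp hb.1).2
        omega
      have habs := rk_anti x (le_of_lt (lt_of_lt_of_le hrb hra))
      calc (x a) ^ 2 = |x a| ^ 2 := (sq_abs _).symm
        _ ≤ |x b| ^ 2 := by nlinarith [abs_nonneg (x a)]
        _ = (x b) ^ 2 := sq_abs _
    have hsd : ∑ a ∈ U \ blk x k 0, (x a) ^ 2 ≤ ∑ b ∈ blk x k 0 \ U, (x b) ^ 2 := by
      have e := Finset.equivOfCardEq hAB
      calc ∑ a ∈ U \ blk x k 0, (x a) ^ 2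
          = ∑ a : (U \ blk x k 0 : Finset (Fin d)), (x a.1) ^ 2 :=
            (Finset.sum_coe_sort _ _).symm
        _ ≤ ∑ a : (U \ blk x k 0 : Finset (Fin d)), (x (e a).1) ^ 2 :=
            Finset.sum_le_sum fun a _ => hcmp a.1 a.2 (e a).1 (e a).2
        _ = ∑ b : (blk x k 0 \ U : Finset (Fin d)), (x b.1) ^ 2 :=
            Equiv.sum_comp e (fun b => (x b.1) ^ 2)
        _ = ∑ b ∈ blk x k 0 \ U, (x b) ^ 2 :=
            Finset.sum_coe_sort (blk x k 0 \ U) (fun i => (x i) ^ 2)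
    have hkey : ∑ i ∈ U, (x i) ^ 2 ≤ ∑ i ∈ blk x k 0, (x i) ^ 2 := by
      have h1 := Finset.sum_inter_add_sum_sdiff U (blk x k 0) (fun i => (x i) ^ 2)
      have h2 := Finset.sum_inter_add_sum_sdiff (blk x k 0) U (fun i => (x i) ^ 2)
      rw [Finset.inter_comm] at h2
      linarith
    have e1 : l2 (restr U x) = Real.sqrt (∑ i ∈ U, (x i) ^ 2) := by
      rw [← restr_sq_sum U x, Real.sqrt_sq (my_l2_nonneg _)]
    have e2 : l2 y = Real.sqrt (∑ i ∈ blk x k 0, (x i) ^ 2) := by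
      rw [hy, ← restr_sq_sum (blk x k 0) x, Real.sqrt_sq (my_l2_nonneg _)]
    rw [e1, e2]
    exact Real.sqrt_le_sqrt hkey
  -- Step 2: decomposition of x into blocks
  set J := (Finset.range d).erase 0 with hJdef
  have hxeq : x = y + ∑ j ∈ J, restr (blk x k j) x := by
    funext i
    have h0 := sum_restr_blk (x := x) hk i
    rw [← Finset.add_sum_erase _ _ (Finset.mem_range.mpr hd)] at h0
    simp only [Pi.add_apply, Finset.sum_apply]
    rw [hy]
    linarith [h0]
  have hBy : B.mulVec y = - ∑ j ∈ J, B.mulVec (restr (blk x k j) x) := by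
    have h0 : B.mulVec x = B.mulVec y + ∑ j ∈ J, B.mulVec (restr (blk x k j) x) := by
      conv_lhs => rw [hxeq]
      simp only [← Matrix.mulVecLin_apply, map_add, map_sum]
    rw [hker] at h0
    rw [eq_neg_iff_add_eq_zero]
    exact h0.symm
  have hsp : ∀ j, sparse k (restr (blk x k j) x) :=
    fun j => sparse_restr (card_blk_le x k j) x
  have hspy : sparse k y := hy ▸ hsp 0
  -- Step 3: the inner product bound
  have hneg : ∀ j, -(restr (blk x k j) x) = restr (blk x k j) (-x) := by
    intro j
    funext i
    simp only [Pi.neg_apply, restr]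
    by_cases hmem : i ∈ blk x k j <;> simp [hmem]
  have hyZ : (l2 (B.mulVec y)) ^ 2 ≤ δ2k * l2 y * ∑ j ∈ J, l2 (restr (blk x k j) x) := by
    have e1 : (l2 (B.mulVec y)) ^ 2 =
        ∑ j ∈ J, ∑ n, B.mulVec y n * B.mulVec (-(restr (blk x k j) x)) n := by
      rw [my_l2_sq]
      calc ∑ n, (B.mulVec y n) ^ 2 = ∑ n, B.mulVec y n * B.mulVec y n := by
            refine Finset.sum_congr rfl fun n _ => by ring
        _ = ∑ n, ∑ j ∈ J, B.mulVec y n * B.mulVec (-(restr (blk x k j) x)) n := by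
            refine Finset.sum_congr rfl fun n _ => ?_
            rw [← Finset.mul_sum]
            congr 1
            rw [hBy]
            simp only [Matrix.mulVec_neg, Pi.neg_apply, Finset.sum_apply, Finset.sum_neg_distrib]
        _ = ∑ j ∈ J, ∑ n, B.mulVec y n * B.mulVec (-(restr (blk x k j) x)) n :=
            Finset.sum_comm
    rw [e1]
    have hbnd : ∀ j ∈ J, ∑ n, B.mulVec y n * B.mulVec (-(restr (blk x k j) x)) n ≤
        δ2k * (l2 y * l2 (restr (blk x k j) x)) := by
      intro j hj
      have hjne : j ≠ 0 := Finset.ne_of_mem_erase hj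
      have hdisj : ∀ i, y i = 0 ∨ (-(restr (blk x k j) x)) i = 0 := by
        intro i
        by_cases hmem : i ∈ blk x k 0
        · right
          have : i ∉ blk x k j := by
            intro hmem'
            exact hjne (blk_uniq hk (mem_blk.mp hmem').1 (mem_blk.mp hmem').2
              (mem_blk.mp hmem).1 (mem_blk.mp hmem).2)
          simp [restr, this]
        · left
          rw [hy]
          simp [restr, hmem]
      have hspn : sparse k (-(restr (blk x k j) x)) := by
        rw [hneg j]
        exact sparse_restr (card_blk_le x k j) (-x)
      have := my_inner_le B k δ2k hδ2k0 hR2k y (-(restr (blk x k j) x)) hspy hspn hdisj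
      rwa [my_l2_neg] at this
    calc ∑ j ∈ J, ∑ n, B.mulVec y n * B.mulVec (-(restr (blk x k j) x)) n
        ≤ ∑ j ∈ J, δ2k * (l2 y * l2 (restr (blk x k j) x)) := Finset.sum_le_sum hbnd
      _ = δ2k * l2 y * ∑ j ∈ J, l2 (restr (blk x k j) x) := by
          rw [Finset.mul_sum]
          refine Finset.sum_congr rfl fun j _ => by ring
  -- Step 4: tail bound
  have htail : ∑ j ∈ J, l2 (restr (blk x k j) x) ≤ l1 x / Real.sqrt k := by
    have hJ : J = (Finset.range (d - 1)).image (· + 1) := by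
      ext j
      simp only [hJdef, Finset.mem_erase, Finset.mem_range, Finset.mem_image]
      constructor
      · rintro ⟨h1, h2⟩
        refine ⟨j - 1, by omega, by omega⟩
      · rintro ⟨m, hm, rfl⟩
        omega
    rw [hJ, Finset.sum_image (by intro a _ b _ h; simp only at h; omega)]
    calc ∑ m ∈ Finset.range (d - 1), l2 (restr (blk x k (m + 1)) x)
        ≤ ∑ m ∈ Finset.range (d - 1), (∑ i ∈ blk x k m, |x i|) / Real.sqrt k :=
          Finset.sum_le_sum fun m _ => blk_l2_le hk m
      _ = (∑ m ∈ Finset.range (d - 1), ∑ i ∈ blk x k m, |x i|) / Real.sqrt k := by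
          rw [Finset.sum_div]
      _ ≤ (∑ m ∈ Finset.range d, ∑ i ∈ blk x k m, |x i|) / Real.sqrt k := by
          have hnum : (∑ m ∈ Finset.range (d - 1), ∑ i ∈ blk x k m, |x i|) ≤
              ∑ m ∈ Finset.range d, ∑ i ∈ blk x k m, |x i| :=
            Finset.sum_le_sum_of_subset_of_nonneg
              (Finset.range_subset_range.mpr (by omega))
              (fun m _ _ => Finset.sum_nonneg fun i _ => abs_nonneg _)
          have h8 := mul_le_mul_of_nonneg_right hnum (le_of_lt (inv_pos.mpr hsk))
          simpa [div_eq_mul_inv] using h8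
      _ = l1 x / Real.sqrt k := by rw [l1_blk_sum hk]
  -- Step 5: conclude
  have hRIPy := (hRk y hspy).1
  rcases eq_or_lt_of_le (my_l2_nonneg y) with hy0 | hy0
  · refine le_trans hUy ?_
    rw [← hy0]
    have : 0 ≤ δ2k / (1 - δk) * (1 / Real.sqrt k) := by positivity
    exact mul_nonneg this (my_l1_nonneg x)
  · have hZnn : 0 ≤ ∑ j ∈ J, l2 (restr (blk x k j) x) :=
      Finset.sum_nonneg fun j _ => my_l2_nonneg _
    have h5 : (1 - δk) * l2 y ≤ δ2k * (∑ j ∈ J, l2 (restr (blk x k j) x)) := by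
      nlinarith [hRIPy, hyZ, hy0]
    have h6 : (1 - δk) * l2 y ≤ δ2k * (l1 x / Real.sqrt k) :=
      le_trans h5 (mul_le_mul_of_nonneg_left htail hδ2k0)
    have h7 : l2 y ≤ (δ2k * (l1 x / Real.sqrt k)) / (1 - δk) := by
      rw [le_div_iff₀ h1k]
      calc l2 y * (1 - δk) = (1 - δk) * l2 y := mul_comm _ _
        _ ≤ δ2k * (l1 x / Real.sqrt k) := h6
    refine le_trans hUy (le_trans h7 (le_of_eq ?_))
    ring
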